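/- For every integer m ≥ 0, Q_m(q) = (1/(q;q)_∞) Σ_{j≥1} (−1)^{j−1} q^{j(3j−1)/2 + mj}. -/

import Mathlib

namespace Dyson

/-- The rank of a partition: largest part minus number of parts. -/
def rank {n : ℕ} (π : n.Partition) : ℤ :=
  (π.parts.sup : ℤ) - π.parts.card

/-- The Euler product `(q;q)_∞`. -/
noncomputable def euler (q : ℝ) : ℝ := ∏' j : ℕ, (1 - q ^ (j + 1))

/-- `Q_m(q)`: generating function for nonempty partitions of rank ≥ m. -/
noncomputable def Q (q : ℝ) (m : ℤ) : ℝ :=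
  ∑' n : ℕ, (Nat.card {π : (n + 1).Partition // m ≤ rank π} : ℝ) * q ^ (n + 1)

noncomputable def qPoch (q : ℝ) (n : ℕ) : ℝ := ∏ j ∈ Finset.range n, (1 - q ^ (j + 1))

noncomputable def qbinom (q : ℝ) (a b : ℤ) : ℝ :=
  if 0 ≤ b ∧ b ≤ a then qPoch q a.toNat / (qPoch q b.toNat * qPoch q (a - b).toNat) else 0

noncomputable def QL (q : ℝ) (m L : ℤ) : ℝ :=
  ∑' n : ℕ,
    (Nat.card {π : (n + 1).Partition // m ≤ rank π ∧ (π.parts.sup : ℤ) ≤ L} : ℝ) * q ^ (n + 1)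

def partAt {n : ℕ} (π : n.Partition) (j : ℕ) : ℕ :=
  ((π.parts.sort (· ≤ ·)).reverse.getD j 0)

def inRankSet {n : ℕ} (π : n.Partition) (k : ℤ) : Prop :=
  ∃ j : ℕ, (j : ℤ) - partAt π (j + 1) = k

noncomputable def G (q : ℝ) (k : ℤ) : ℝ :=
  ∑' n : ℕ, (Nat.card {π : n.Partition // inRankSet π k} : ℝ) * q ^ n

def crank {n : ℕ} (π : n.Partition) : ℤ :=
  if π.parts.count 1 = 0 then (π.parts.sup : ℤ)
  else ((π.parts.filter (fun p => π.parts.count 1 < p)).card : ℤ) - π.parts.count 1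





open Multiset

lemma sup_mem_of_ne_zero {s : Multiset ℕ} (h : s ≠ 0) : s.sup ∈ s := by
  induction s using Multiset.induction with
  | empty => simp at h
  | cons a s ih =>
    rcases eq_or_ne s 0 with rfl | hs
    · simp
    · rw [Multiset.sup_cons]
      rcases le_total a s.sup with h1 | h1
      · rw [sup_eq_right.mpr h1]; exact Multiset.mem_cons_of_mem (ih hs)
      · rw [sup_eq_left.mpr h1]; exact Multiset.mem_cons_self a s

/-- sum of (x+1) over s -/
lemma sum_map_succ (s : Multiset ℕ) : (s.map (fun x => x + 1)).sum = s.sum + s.card := by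
  have : (s.map (fun x => x + 1)).sum = (s.map id).sum + (s.map (fun _ => 1)).sum :=
    Multiset.sum_map_add
  simpa using this

section Bij

variable (m n' : ℕ)

/-- Dyson's map, forward direction. -/
def dysonFwd (π : (n' + m + 1).Partition) (hπ : (m : ℤ) ≤ rank π) : n'.Partition := by
  refine ⟨(π.parts.erase π.parts.sup).map (fun x => x + 1)
      + replicate (π.parts.sup - (m + π.parts.card)) 1, ?_, ?_⟩
  · intro i hi
    rcases Multiset.mem_add.mp hi with hi | hi
    · rcases Multiset.mem_map.mp hi with ⟨x, _, rfl⟩; omega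
    · rw [Multiset.eq_of_mem_replicate hi]; norm_num
  · have hne : π.parts ≠ 0 := by
      intro h0
      have := π.parts_sum
      rw [h0] at this; simp at this
    have hmem : π.parts.sup ∈ π.parts := sup_mem_of_ne_zero hne
    have hcons : π.parts.sup ::ₘ π.parts.erase π.parts.sup = π.parts := Multiset.cons_erase hmem
    have hsum : π.parts.sup + (π.parts.erase π.parts.sup).sum = n' + m + 1 := by
      rw [← Multiset.sum_cons, hcons, π.parts_sum]
    have hcard : (π.parts.erase π.parts.sup).card + 1 = π.parts.card := by
      rw [← Multiset.card_cons, hcons]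
    have hrank : π.parts.card + m ≤ π.parts.sup := by
      unfold rank at hπ; omega
    rw [Multiset.sum_add, sum_map_succ, Multiset.sum_replicate, smul_eq_mul, mul_one]
    omega

/-- Dyson's map, backward direction. -/
def dysonBwd (σ : n'.Partition) (hσ : rank σ ≤ (m : ℤ) + 2) : (n' + m + 1).Partition := by
  refine ⟨(σ.parts.card + m + 1) ::ₘ (σ.parts.filter (fun x => 2 ≤ x)).map (fun x => x - 1),
    ?_, ?_⟩
  · intro i hi
    rcases Multiset.mem_cons.mp hi with rfl | hi
    · omega
    · rcases Multiset.mem_map.mp hi with ⟨x, hx, rfl⟩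
      have := (Multiset.mem_filter.mp hx).2
      omega
  · have hsplit : σ.parts.filter (fun x => 2 ≤ x) + σ.parts.filter (fun x => ¬ 2 ≤ x)
        = σ.parts := Multiset.filter_add_not _ _
    set F := σ.parts.filter (fun x => 2 ≤ x) with hF
    set G := σ.parts.filter (fun x => ¬ 2 ≤ x) with hG
    have hGone : ∀ b ∈ G, b = 1 := by
      intro b hb
      have h2 := Multiset.mem_filter.mp hb
      have := σ.parts_pos h2.1
      omega
    have hGsum : G.sum = G.card := by
      rw [Multiset.eq_replicate_card.mpr hGone]
      simp
    have hFsum : (F.map (fun x => x - 1)).sum + F.card = F.sum := by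
      have h2 : F.map (fun x => (x - 1) + 1) = F := by
        have hc : ∀ x ∈ F, (x - 1) + 1 = id x := by
          intro x hx
          have := (Multiset.mem_filter.mp hx).2
          simp; omega
        rw [Multiset.map_congr rfl hc, Multiset.map_id]
      have h1 : (F.map (fun x => (x-1) + 1)).sum = (F.map (fun x => x - 1)).sum
          + (F.map (fun _ => 1)).sum := Multiset.sum_map_add
      rw [h2] at h1
      simp only [Multiset.map_const', Multiset.sum_replicate, smul_eq_mul, mul_one] at h1
      omega
    have hsum : F.sum + G.sum = n' := by rw [← Multiset.sum_add, hsplit, σ.parts_sum]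
    have hcard : F.card + G.card = σ.parts.card := by rw [← Multiset.card_add, hsplit]
    rw [Multiset.sum_cons]
    omega

end Bij


open Multiset

section Bij2
variable (m n' : ℕ)

lemma dysonFwd_parts (π : (n' + m + 1).Partition) (hπ : (m : ℤ) ≤ rank π) :
    (dysonFwd m n' π hπ).parts = (π.parts.erase π.parts.sup).map (fun x => x + 1)
      + replicate (π.parts.sup - (m + π.parts.card)) 1 := rfl

lemma dysonBwd_parts (σ : n'.Partition) (hσ : rank σ ≤ (m : ℤ) + 2) :
    (dysonBwd m n' σ hσ).parts =
      (σ.parts.card + m + 1) ::ₘ (σ.parts.filter (fun x => 2 ≤ x)).map (fun x => x - 1) := rfl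

lemma parts_ne_zero (π : (n' + m + 1).Partition) : π.parts ≠ 0 := by
  intro h0
  have := π.parts_sum
  rw [h0] at this; simp at this

lemma dysonFwd_rank (π : (n' + m + 1).Partition) (hπ : (m : ℤ) ≤ rank π) :
    rank (dysonFwd m n' π hπ) ≤ (m : ℤ) + 2 := by
  have hmem : π.parts.sup ∈ π.parts := sup_mem_of_ne_zero (parts_ne_zero m n' π)
  have hcons : π.parts.sup ::ₘ π.parts.erase π.parts.sup = π.parts := Multiset.cons_erase hmem
  have hcard : (π.parts.erase π.parts.sup).card + 1 = π.parts.card := by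
    rw [← Multiset.card_cons, hcons]
  have hrank : π.parts.card + m ≤ π.parts.sup := by
    unfold rank at hπ; omega
  have hsup : (dysonFwd m n' π hπ).parts.sup ≤ π.parts.sup + 1 := by
    rw [Multiset.sup_le]
    intro b hb
    rw [dysonFwd_parts] at hb
    rcases Multiset.mem_add.mp hb with hb | hb
    · rcases Multiset.mem_map.mp hb with ⟨x, hx, rfl⟩
      have : x ≤ π.parts.sup := Multiset.le_sup (Multiset.mem_of_mem_erase hx)
      omega
    · rw [Multiset.eq_of_mem_replicate hb]; omega
  have hcard2 : (dysonFwd m n' π hπ).parts.card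
      = (π.parts.erase π.parts.sup).card + (π.parts.sup - (m + π.parts.card)) := by
    rw [dysonFwd_parts, Multiset.card_add, Multiset.card_map, Multiset.card_replicate]
  unfold rank
  omega

lemma dysonBwd_rank (σ : n'.Partition) (hσ : rank σ ≤ (m : ℤ) + 2) :
    (m : ℤ) ≤ rank (dysonBwd m n' σ hσ) := by
  have hF : (σ.parts.filter (fun x => 2 ≤ x)).card ≤ σ.parts.card :=
    Multiset.card_le_card (Multiset.filter_le _ _)
  have hsupσ : σ.parts.sup ≤ σ.parts.card + m + 2 := by
    unfold rank at hσ; omega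
  have hsup : (dysonBwd m n' σ hσ).parts.sup = σ.parts.card + m + 1 := by
    apply le_antisymm
    · rw [Multiset.sup_le]
      intro b hb
      rw [dysonBwd_parts] at hb
      rcases Multiset.mem_cons.mp hb with rfl | hb
      · omega
      · rcases Multiset.mem_map.mp hb with ⟨x, hx, rfl⟩
        have hx2 : x ≤ σ.parts.sup := Multiset.le_sup (Multiset.mem_filter.mp hx).1
        omega
    · apply Multiset.le_sup
      rw [dysonBwd_parts]
      exact Multiset.mem_cons_self _ _
  have hcard : (dysonBwd m n' σ hσ).parts.card = (σ.parts.filter (fun x => 2 ≤ x)).card + 1 := by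
    rw [dysonBwd_parts, Multiset.card_cons, Multiset.card_map]
  unfold rank
  omega

lemma dyson_left_inv (π : (n' + m + 1).Partition) (hπ : (m : ℤ) ≤ rank π) :
    dysonBwd m n' (dysonFwd m n' π hπ) (dysonFwd_rank m n' π hπ) = π := by
  apply Nat.Partition.ext
  have hmem : π.parts.sup ∈ π.parts := sup_mem_of_ne_zero (parts_ne_zero m n' π)
  have hcons : π.parts.sup ::ₘ π.parts.erase π.parts.sup = π.parts := Multiset.cons_erase hmem
  have hcard : (π.parts.erase π.parts.sup).card + 1 = π.parts.card := by
    rw [← Multiset.card_cons, hcons]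
  have hrank : π.parts.card + m ≤ π.parts.sup := by
    unfold rank at hπ; omega
  rw [dysonBwd_parts, dysonFwd_parts]
  have hfilter : ((π.parts.erase π.parts.sup).map (fun x => x + 1)
      + replicate (π.parts.sup - (m + π.parts.card)) 1).filter (fun x => 2 ≤ x)
      = (π.parts.erase π.parts.sup).map (fun x => x + 1) := by
    rw [Multiset.filter_add]
    have h1 : ((π.parts.erase π.parts.sup).map (fun x => x + 1)).filter (fun x => 2 ≤ x)
        = (π.parts.erase π.parts.sup).map (fun x => x + 1) := by
      apply Multiset.filter_eq_self.mpr
      intro b hb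
      rcases Multiset.mem_map.mp hb with ⟨x, hx, rfl⟩
      have := π.parts_pos (Multiset.mem_of_mem_erase hx)
      omega
    have h2 : (replicate (π.parts.sup - (m + π.parts.card)) (1:ℕ)).filter (fun x => 2 ≤ x)
        = 0 := by
      rw [Multiset.filter_eq_nil]
      intro a ha
      rw [Multiset.eq_of_mem_replicate ha]
      omega
    rw [h1, h2, add_zero]
  have hmap : ((π.parts.erase π.parts.sup).map (fun x => x + 1)).map (fun x => x - 1)
      = π.parts.erase π.parts.sup := by
    rw [Multiset.map_map]
    simp
  have hcard2 : ((π.parts.erase π.parts.sup).map (fun x => x + 1)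
      + replicate (π.parts.sup - (m + π.parts.card)) 1).card + m + 1 = π.parts.sup := by
    rw [Multiset.card_add, Multiset.card_map, Multiset.card_replicate]
    omega
  rw [hfilter, hmap, hcard2, hcons]

lemma dyson_right_inv (σ : n'.Partition) (hσ : rank σ ≤ (m : ℤ) + 2) :
    dysonFwd m n' (dysonBwd m n' σ hσ) (dysonBwd_rank m n' σ hσ) = σ := by
  apply Nat.Partition.ext
  have hsupσ : σ.parts.sup ≤ σ.parts.card + m + 2 := by
    unfold rank at hσ; omega
  have hsup : (dysonBwd m n' σ hσ).parts.sup = σ.parts.card + m + 1 := by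
    apply le_antisymm
    · rw [Multiset.sup_le]
      intro b hb
      rw [dysonBwd_parts] at hb
      rcases Multiset.mem_cons.mp hb with rfl | hb
      · omega
      · rcases Multiset.mem_map.mp hb with ⟨x, hx, rfl⟩
        have hx2 : x ≤ σ.parts.sup := Multiset.le_sup (Multiset.mem_filter.mp hx).1
        omega
    · apply Multiset.le_sup
      rw [dysonBwd_parts]
      exact Multiset.mem_cons_self _ _
  rw [dysonFwd_parts, hsup, dysonBwd_parts]
  have herase : ((σ.parts.card + m + 1) ::ₘ
      (σ.parts.filter (fun x => 2 ≤ x)).map (fun x => x - 1)).erase (σ.parts.card + m + 1)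
      = (σ.parts.filter (fun x => 2 ≤ x)).map (fun x => x - 1) :=
    Multiset.erase_cons_head _ _
  rw [herase]
  have hmap : ((σ.parts.filter (fun x => 2 ≤ x)).map (fun x => x - 1)).map (fun x => x + 1)
      = σ.parts.filter (fun x => 2 ≤ x) := by
    rw [Multiset.map_map]
    have hc : ∀ x ∈ σ.parts.filter (fun x => 2 ≤ x),
        ((fun x => x + 1) ∘ fun x => x - 1) x = id x := by
      intro x hx
      have := (Multiset.mem_filter.mp hx).2
      simp; omega
    rw [Multiset.map_congr rfl hc, Multiset.map_id]
  rw [hmap]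
  have hcardc : ((σ.parts.card + m + 1) ::ₘ
      (σ.parts.filter (fun x => 2 ≤ x)).map (fun x => x - 1)).card
      = (σ.parts.filter (fun x => 2 ≤ x)).card + 1 := by
    rw [Multiset.card_cons, Multiset.card_map]
  rw [hcardc]
  have hG : σ.parts.filter (fun x => ¬ 2 ≤ x)
      = replicate (σ.parts.filter (fun x => ¬ 2 ≤ x)).card 1 := by
    apply Multiset.eq_replicate_card.mpr
    intro b hb
    have h2 := Multiset.mem_filter.mp hb
    have := σ.parts_pos h2.1
    omega
  have hsplit : σ.parts.filter (fun x => 2 ≤ x) + σ.parts.filter (fun x => ¬ 2 ≤ x)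
      = σ.parts := Multiset.filter_add_not _ _
  have hcards : (σ.parts.filter (fun x => 2 ≤ x)).card
      + (σ.parts.filter (fun x => ¬ 2 ≤ x)).card = σ.parts.card := by
    rw [← Multiset.card_add, hsplit]
  have hrepl : σ.parts.card + m + 1 - (m + ((σ.parts.filter (fun x => 2 ≤ x)).card + 1))
      = (σ.parts.filter (fun x => ¬ 2 ≤ x)).card := by omega
  rw [hrepl, ← hG, hsplit]

def dysonEquiv : {π : (n' + m + 1).Partition // (m : ℤ) ≤ rank π}
    ≃ {σ : n'.Partition // rank σ ≤ (m : ℤ) + 2} where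
  toFun x := ⟨dysonFwd m n' x.1 x.2, dysonFwd_rank m n' x.1 x.2⟩
  invFun y := ⟨dysonBwd m n' y.1 y.2, dysonBwd_rank m n' y.1 y.2⟩
  left_inv x := Subtype.ext (dyson_left_inv m n' x.1 x.2)
  right_inv y := Subtype.ext (dyson_right_inv m n' y.1 y.2)

end Bij2
section Count

/-- number of partitions of `n` -/
noncomputable def pfn (n : ℕ) : ℕ := Nat.card (Nat.Partition n)

/-- number of partitions of `n` with rank at least `m` -/
noncomputable def aR (m n : ℕ) : ℕ := Nat.card {π : n.Partition // (m : ℤ) ≤ rank π}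

/-- number of partitions of `n` with rank at most `k` -/
noncomputable def bR (k n : ℕ) : ℕ := Nat.card {σ : n.Partition // rank σ ≤ (k : ℤ)}

lemma aR_add_bR (k n : ℕ) : aR (k + 1) n + bR k n = pfn n := by
  classical
  rw [aR, bR, pfn, Nat.card_eq_fintype_card, Nat.card_eq_fintype_card, Nat.card_eq_fintype_card]
  have h : ∀ σ : n.Partition, (((k + 1 : ℕ) : ℤ)) ≤ rank σ ↔ ¬ (rank σ ≤ (k : ℤ)) := by
    intro σ
    push_cast
    omega
  rw [Fintype.card_congr (Equiv.subtypeEquivRight h)]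
  rw [Fintype.card_subtype_compl]
  have := Fintype.card_subtype_le (fun σ : n.Partition => rank σ ≤ (k : ℤ))
  omega

lemma rank_le_of_pos {n : ℕ} (hn : 0 < n) (π : n.Partition) : rank π ≤ (n : ℤ) - 1 := by
  have hne : π.parts ≠ 0 := by
    intro h0
    have := π.parts_sum
    rw [h0] at this
    simp at this
    omega
  have hmem : π.parts.sup ∈ π.parts := sup_mem_of_ne_zero hne
  have h1 : π.parts.sup ≤ n := by
    have := Multiset.le_sum_of_mem hmem
    rwa [π.parts_sum] at this
  have h2 : 1 ≤ π.parts.card := by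
    rw [Nat.one_le_iff_ne_zero, Ne, Multiset.card_eq_zero]
    exact hne
  unfold rank
  omega

lemma aR_eq_zero {m n : ℕ} (h1 : 1 ≤ n) (h2 : n ≤ m) : aR m n = 0 := by
  rw [aR]
  have : IsEmpty {π : n.Partition // (m : ℤ) ≤ rank π} := by
    refine ⟨fun x => ?_⟩
    have := rank_le_of_pos h1 x.1
    have := x.2
    omega
  exact Nat.card_of_isEmpty

lemma rank_zero_partition (π : Nat.Partition 0) : rank π = 0 := by
  have : π.parts = 0 := by
    by_contra h0
    obtain ⟨a, ha⟩ := Multiset.exists_mem_of_ne_zero h0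
    have h1 := π.parts_pos ha
    have h2 := Multiset.le_sum_of_mem ha
    rw [π.parts_sum] at h2
    omega
  rw [rank, this]
  simp

lemma aR_zero {k : ℕ} (hk : 1 ≤ k) : aR k 0 = 0 := by
  rw [aR]
  have : IsEmpty {π : Nat.Partition 0 // (k : ℤ) ≤ rank π} := by
    refine ⟨fun x => ?_⟩
    have := rank_zero_partition x.1
    have := x.2
    omega
  exact Nat.card_of_isEmpty

lemma aR_rec (m n' : ℕ) : aR m (n' + m + 1) = bR (m + 2) n' := by
  rw [aR, bR]
  refine Nat.card_congr ((dysonEquiv m n').trans (Equiv.subtypeEquivRight ?_))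
  intro σ
  push_cast
  constructor <;> intro <;> omega

/-- partition counting extended to `ℤ` -/
noncomputable def Pz (t : ℤ) : ℤ := if 0 ≤ t then (pfn t.toNat : ℤ) else 0

/-- rank-at-least counting extended to `ℤ` -/
noncomputable def Az (m : ℕ) (t : ℤ) : ℤ := if 0 < t then (aR m t.toNat : ℤ) else 0

lemma Az_rec (m : ℕ) (t : ℤ) (ht : 0 < t) :
    Az m t = Pz (t - m - 1) - Az (m + 3) (t - m - 1) := by
  rcases lt_or_ge (t - m - 1) 0 with h' | h'
  · rw [Az, if_pos ht, Pz, if_neg (by omega), Az, if_neg (by omega)]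
    have h1 : 1 ≤ t.toNat := by omega
    have h2 : t.toNat ≤ m := by omega
    rw [aR_eq_zero h1 h2]
    simp
  · have htn : t.toNat = (t - m - 1).toNat + m + 1 := by omega
    have key : aR (m + 3) (t - m - 1).toNat + bR (m + 2) (t - m - 1).toNat
        = pfn (t - m - 1).toNat := aR_add_bR (m + 2) _
    have hval : Az (m + 3) (t - m - 1) = (aR (m + 3) (t - m - 1).toNat : ℤ) := by
      rcases eq_or_lt_of_le h' with h0 | h0
      · rw [Az, if_neg (by omega)]
        have h00 : (t - m - 1).toNat = 0 := by omega
        rw [h00, aR_zero (by omega)]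
        simp
      · rw [Az, if_pos h0]
    rw [Az, if_pos ht, htn, aR_rec, Pz, if_pos h', hval]
    omega

/-- pentagonal-type exponents: `g m j = (j+1)(3(j+1)-1)/2 + m(j+1)` -/
def g (m j : ℕ) : ℕ := (j + 1) * (3 * (j + 1) - 1) / 2 + m * (j + 1)

lemma two_mul_aux (j : ℕ) : 2 * ((j + 1) * (3 * (j + 1) - 1) / 2) = (j + 1) * (3 * (j + 1) - 1) := by
  rcases Nat.even_or_odd j with ⟨c, rfl⟩ | ⟨c, rfl⟩
  · have h : (c + c + 1) * (3 * (c + c + 1) - 1) = 2 * ((c + c + 1) * (3 * c + 1)) := by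
      have : 3 * (c + c + 1) - 1 = 2 * (3 * c + 1) := by omega
      rw [this]; ring
    rw [h, Nat.mul_div_cancel_left _ (by norm_num)]
  · have h : (2 * c + 1 + 1) * (3 * (2 * c + 1 + 1) - 1) = 2 * ((c + 1) * (6 * c + 5)) := by
      have : 3 * (2 * c + 1 + 1) - 1 = 6 * c + 5 := by omega
      rw [this]
      ring
    rw [h, Nat.mul_div_cancel_left _ (by norm_num)]

lemma two_mul_g (m j : ℕ) : 2 * g m j = (j + 1) * (3 * (j + 1) - 1) + 2 * (m * (j + 1)) := by
  rw [g, Nat.mul_add, two_mul_aux]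

lemma g_zero (m : ℕ) : g m 0 = m + 1 := by
  rw [g]
  norm_num
  omega

lemma g_succ (m j : ℕ) : g m (j + 1) = g (m + 3) j + (m + 1) := by
  have h1 := two_mul_g m (j + 1)
  have h2 := two_mul_g (m + 3) j
  have key : (j + 1 + 1) * (3 * (j + 1 + 1) - 1) = (j + 1) * (3 * (j + 1) - 1) + (6 * j + 8) := by
    have e1 : 3 * (j + 1 + 1) - 1 = 3 * j + 5 := by omega
    have e2 : 3 * (j + 1) - 1 = 3 * j + 2 := by omega
    rw [e1, e2]; ring
  have key2 : (m + 3) * (j + 1) = m * (j + 1) + 3 * j + 3 := by ring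
  have key3 : m * (j + 1 + 1) = m * (j + 1) + m := by ring
  omega

lemma g_ge (m j : ℕ) : m + j + 1 ≤ g m j := by
  have h1 := two_mul_g m j
  have h2 : (j + 1) * 2 ≤ (j + 1) * (3 * (j + 1) - 1) := by
    apply Nat.mul_le_mul_left
    omega
  have h3 : m * 1 ≤ m * (j + 1) := by
    apply Nat.mul_le_mul_left
    omega
  omega

/-- finite unfolding of the Dyson recurrence -/
lemma Az_eq_sum : ∀ N : ℕ, ∀ m : ℕ,
    Az m N = ∑ j ∈ Finset.range N, (-1 : ℤ) ^ j * Pz ((N : ℤ) - g m j) := by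
  intro N
  induction N using Nat.strong_induction_on with
  | _ N IH =>
    intro m
    rcases Nat.eq_zero_or_pos N with rfl | hN
    · simp [Az]
    rw [Az_rec m N (by exact_mod_cast hN)]
    rcases lt_or_ge ((N : ℤ)) (m + 1) with hle | hle
    · rw [Pz, if_neg (by omega), Az, if_neg (by omega)]
      rw [Finset.sum_eq_zero]
      · ring
      intro j _
      have hg := g_ge m j
      rw [Pz, if_neg (by push_cast; omega)]
      ring
    · have hmN : m + 1 ≤ N := by exact_mod_cast hle
      set N' : ℕ := N - (m + 1) with hN'
      have hcast : (N : ℤ) - m - 1 = (N' : ℤ) := by push_cast; omega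
      have hlt : N' < N := by omega
      rw [hcast, IH N' hlt (m + 3)]
      have hterm : ∀ j ∈ Finset.range N',
          (-1 : ℤ) ^ j * Pz ((N' : ℤ) - g (m + 3) j)
          = (-1 : ℤ) ^ j * Pz ((N : ℤ) - g m (j + 1)) := by
        intro j _
        have hg := g_succ m j
        have : ((N' : ℤ)) - g (m + 3) j = (N : ℤ) - g m (j + 1) := by
          rw [hg]; push_cast; omega
        rw [this]
      rw [Finset.sum_congr rfl hterm]
      have step : Pz ((N : ℤ) - g m 0) - ∑ j ∈ Finset.range N', (-1 : ℤ) ^ j * Pz ((N : ℤ) - g m (j + 1))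
          = ∑ j ∈ Finset.range (N' + 1), (-1 : ℤ) ^ j * Pz ((N : ℤ) - g m j) := by
        rw [Finset.sum_range_succ']
        have hsgn : ∀ j ∈ Finset.range N', (-1 : ℤ) ^ (j + 1) * Pz ((N : ℤ) - g m (j + 1))
            = -((-1 : ℤ) ^ j * Pz ((N : ℤ) - g m (j + 1))) := fun j _ => by ring
        rw [Finset.sum_congr rfl hsgn, Finset.sum_neg_distrib]
        simp only [pow_zero, one_mul]
        ring
      rw [show Pz ((N' : ℤ)) = Pz ((N : ℤ) - g m 0) from by
        rw [g_zero]; congr 1; push_cast; omega]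
      rw [step]
      apply Finset.sum_subset
      · intro j hj
        simp only [Finset.mem_range] at *
        omega
      · intro j _ hj
        simp only [Finset.mem_range, not_lt] at hj
        have hg := g_ge m j
        rw [Pz, if_neg (by push_cast; omega)]
        ring

end Count
section Bounded

lemma parts_eq_zero (π : Nat.Partition 0) : π.parts = 0 := by
  by_contra h0
  obtain ⟨a, ha⟩ := Multiset.exists_mem_of_ne_zero h0
  have h1 := π.parts_pos ha
  have h2 := Multiset.le_sum_of_mem ha
  rw [π.parts_sum] at h2
  omega

/-- number of partitions of `n` with all parts at most `N` -/
noncomputable def pb (N n : ℕ) : ℕ := Nat.card {π : n.Partition // ∀ i ∈ π.parts, i ≤ N}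

lemma pb_zero (n : ℕ) : pb 0 n = if n = 0 then 1 else 0 := by
  rcases eq_or_ne n 0 with rfl | hn
  · rw [if_pos rfl, pb]
    have hu : ∀ x : {π : Nat.Partition 0 // ∀ i ∈ π.parts, i ≤ 0},
        x = ⟨⟨0, by simp, by simp⟩, by simp⟩ := by
      intro x
      apply Subtype.ext
      apply Nat.Partition.ext
      rw [parts_eq_zero x.1]
    haveI : Unique {π : Nat.Partition 0 // ∀ i ∈ π.parts, i ≤ 0} :=
      ⟨⟨⟨⟨0, by simp, by simp⟩, by simp⟩⟩, hu⟩
    exact Nat.card_unique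
  · rw [if_neg hn, pb]
    have : IsEmpty {π : n.Partition // ∀ i ∈ π.parts, i ≤ 0} := by
      refine ⟨fun x => ?_⟩
      have hne : x.1.parts ≠ 0 := by
        intro h0
        have := x.1.parts_sum
        rw [h0] at this
        simp at this
        omega
      obtain ⟨a, ha⟩ := Multiset.exists_mem_of_ne_zero hne
      have := x.1.parts_pos ha
      have := x.2 a ha
      omega
    exact Nat.card_of_isEmpty

lemma pb_eq_pfn {N n : ℕ} (h : n ≤ N) : pb N n = pfn n := by
  rw [pb, pfn]
  refine Nat.card_congr (Equiv.subtypeUnivEquiv ?_)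
  intro π i hi
  have := Multiset.le_sum_of_mem hi
  rw [π.parts_sum] at this
  omega

lemma pb_le_pfn (N n : ℕ) : pb N n ≤ pfn n := by
  rw [pb, pfn]
  exact Nat.card_le_card_of_injective _ Subtype.val_injective

lemma aR_le_pfn (m n : ℕ) : aR m n ≤ pfn n := by
  rw [aR, pfn]
  exact Nat.card_le_card_of_injective _ Subtype.val_injective

/-- removing a part of size `N+1` -/
def partRemove (N n' : ℕ) :
    {π : (n' + (N + 1)).Partition // (∀ i ∈ π.parts, i ≤ N + 1) ∧ (N + 1) ∈ π.parts}
    ≃ {π : n'.Partition // ∀ i ∈ π.parts, i ≤ N + 1} where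
  toFun x := ⟨⟨x.1.parts.erase (N + 1),
      fun hi => x.1.parts_pos (Multiset.mem_of_mem_erase hi), by
        have hc : (N + 1) ::ₘ x.1.parts.erase (N + 1) = x.1.parts := Multiset.cons_erase x.2.2
        have := x.1.parts_sum
        rw [← hc, Multiset.sum_cons] at this
        omega⟩,
    fun i hi => x.2.1 i (Multiset.mem_of_mem_erase hi)⟩
  invFun y := ⟨⟨(N + 1) ::ₘ y.1.parts,
      fun hi => by
        rcases Multiset.mem_cons.mp hi with rfl | hi
        · omega
        · exact y.1.parts_pos hi, by
        rw [Multiset.sum_cons, y.1.parts_sum]; omega⟩,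
    ⟨fun i hi => by
        rcases Multiset.mem_cons.mp hi with rfl | hi
        · omega
        · exact y.2 i hi,
      Multiset.mem_cons_self _ _⟩⟩
  left_inv x := by
    apply Subtype.ext
    apply Nat.Partition.ext
    exact Multiset.cons_erase x.2.2
  right_inv y := by
    apply Subtype.ext
    apply Nat.Partition.ext
    exact Multiset.erase_cons_head _ _

lemma card_split {α : Type*} [Fintype α] (p r : α → Prop) [DecidablePred p] [DecidablePred r] :
    Nat.card {x // p x} = Nat.card {x // p x ∧ r x} + Nat.card {x // p x ∧ ¬ r x} := by
  classical
  rw [Nat.card_eq_fintype_card, Nat.card_eq_fintype_card, Nat.card_eq_fintype_card]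
  rw [Fintype.card_subtype, Fintype.card_subtype, Fintype.card_subtype]
  rw [← Finset.filter_filter, ← Finset.filter_filter]
  exact (Finset.card_filter_add_card_filter_not (s := Finset.univ.filter p) r).symm

lemma pb_succ (N n : ℕ) :
    pb (N + 1) n = pb N n + (if N + 1 ≤ n then pb (N + 1) (n - (N + 1)) else 0) := by
  classical
  rcases lt_or_ge n (N + 1) with hn | hn
  · rw [if_neg (by omega), add_zero, pb, pb]
    refine Nat.card_congr (Equiv.subtypeEquivRight ?_)
    intro π
    constructor
    · intro h i hi
      have h2 := Multiset.le_sum_of_mem hi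
      rw [π.parts_sum] at h2
      omega
    · intro h i hi
      exact le_trans (h i hi) (by omega)
  · obtain ⟨n', rfl⟩ : ∃ n', n = n' + (N + 1) := ⟨n - (N + 1), by omega⟩
    rw [if_pos hn]
    have hsub : n' + (N + 1) - (N + 1) = n' := by omega
    rw [hsub]
    have hsplit := card_split (α := (n' + (N + 1)).Partition)
      (fun π => ∀ i ∈ π.parts, i ≤ N + 1) (fun π => (N + 1) ∈ π.parts)
    have h1 : Nat.card {π : (n' + (N + 1)).Partition //
        (∀ i ∈ π.parts, i ≤ N + 1) ∧ ¬ (N + 1) ∈ π.parts} = pb N (n' + (N + 1)) := by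
      rw [pb]
      refine Nat.card_congr (Equiv.subtypeEquivRight ?_)
      intro π
      constructor
      · rintro ⟨hb, hmem⟩ i hi
        have := hb i hi
        rcases eq_or_lt_of_le this with h | h
        · exact absurd (h ▸ hi) hmem
        · omega
      · intro h
        refine ⟨fun i hi => le_trans (h i hi) (by omega), fun hmem => by
          have := h _ hmem; omega⟩
    have h2 : Nat.card {π : (n' + (N + 1)).Partition //
        (∀ i ∈ π.parts, i ≤ N + 1) ∧ (N + 1) ∈ π.parts} = pb (N + 1) n' :=
      Nat.card_congr (partRemove N n')
    rw [pb, hsplit, h1, h2]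
    ring

end Bounded
section Analytic

open Finset Filter

lemma abs_prod_one_add_sub_one (s : Finset ℕ) (f : ℕ → ℝ) :
    |∏ j ∈ s, (1 + f j) - 1| ≤ Real.exp (∑ j ∈ s, |f j|) - 1 := by
  classical
  induction s using Finset.induction_on with
  | empty => simp
  | insert _ _ ha ih =>
    rename_i a s
    rw [Finset.prod_insert ha, Finset.sum_insert ha]
    have h1 : (1 + f a) * ∏ j ∈ s, (1 + f j) - 1
        = (1 + f a) * ((∏ j ∈ s, (1 + f j)) - 1) + f a := by ring
    have h2 : |(1 + f a) * ∏ j ∈ s, (1 + f j) - 1|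
        ≤ |1 + f a| * |(∏ j ∈ s, (1 + f j)) - 1| + |f a| := by
      rw [h1]
      exact le_trans (abs_add_le _ _) (by rw [abs_mul])
    have h3 : |1 + f a| ≤ 1 + |f a| := le_trans (abs_add_le _ _) (by simp)
    have h4 : (0:ℝ) ≤ ∑ j ∈ s, |f j| := Finset.sum_nonneg fun j _ => abs_nonneg _
    have h5 : (1:ℝ) ≤ Real.exp (∑ j ∈ s, |f j|) := Real.one_le_exp h4
    have h6 : 1 + |f a| ≤ Real.exp |f a| := by
      have := Real.add_one_le_exp |f a|; linarith
    have h7 : Real.exp (|f a| + ∑ j ∈ s, |f j|) = Real.exp |f a| * Real.exp (∑ j ∈ s, |f j|) :=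
      Real.exp_add _ _
    have h8 : |(∏ j ∈ s, (1 + f j)) - 1| ≤ Real.exp (∑ j ∈ s, |f j|) - 1 := ih
    have h9 : (0:ℝ) ≤ |f a| := abs_nonneg _
    nlinarith [abs_nonneg ((∏ j ∈ s, (1 + f j)) - 1), Real.exp_nonneg |f a|]

lemma prod_one_add_le_exp (s : Finset ℕ) (f : ℕ → ℝ) (hf : ∀ j, 0 ≤ f j) :
    ∏ j ∈ s, (1 + f j) ≤ Real.exp (∑ j ∈ s, f j) := by
  rw [Real.exp_sum]
  exact Finset.prod_le_prod (fun j _ => by linarith [hf j])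
    (fun j _ => by have := Real.add_one_le_exp (f j); linarith)

variable {y : ℝ}

lemma sumpow (hy0 : 0 ≤ y) (hy1 : y < 1) (s : Finset ℕ) :
    ∑ j ∈ s, y ^ (j + 1) ≤ (1 - y)⁻¹ := by
  have hs : Summable (fun j : ℕ => y ^ (j + 1)) := by
    simpa [pow_succ'] using (summable_geometric_of_lt_one hy0 hy1).mul_left y
  have h1 : ∑ j ∈ s, y ^ (j + 1) ≤ ∑' j : ℕ, y ^ (j + 1) :=
    Summable.sum_le_tsum s (fun j _ => pow_nonneg hy0 _) hs
  have h2 : ∑' j : ℕ, y ^ (j + 1) = y * (1 - y)⁻¹ := by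
    rw [show (fun j : ℕ => y ^ (j+1)) = fun j : ℕ => y * y ^ j from funext fun j => by
      rw [pow_succ']]
    rw [tsum_mul_left, tsum_geometric_of_lt_one hy0 hy1]
  have h3 : y * (1 - y)⁻¹ ≤ 1 * (1 - y)⁻¹ :=
    mul_le_mul_of_nonneg_right (le_of_lt hy1) (inv_nonneg.mpr (by linarith))
  rw [one_mul] at h3
  linarith

lemma tail_sum (hy0 : 0 ≤ y) (hy1 : y < 1) (N : ℕ) (s : Finset ℕ) (hs : ∀ j ∈ s, N ≤ j) :
    ∑ j ∈ s, y ^ (j + 1) ≤ y ^ N * (1 - y)⁻¹ := by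
  have h1 : ∑ j ∈ s, y ^ (j + 1) = y ^ N * ∑ j ∈ s, y ^ (j - N + 1) := by
    rw [Finset.mul_sum]
    refine Finset.sum_congr rfl fun j hj => ?_
    rw [← pow_add]
    congr 1
    have := hs j hj
    omega
  rw [h1]
  apply mul_le_mul_of_nonneg_left _ (pow_nonneg hy0 _)
  have h2 : ∑ j ∈ s, y ^ (j - N + 1) = ∑ k ∈ s.image (· - N), y ^ (k + 1) := by
    rw [Finset.sum_image]
    intro a ha b hb hab
    have := hs a ha
    have := hs b hb
    beta_reduce at hab
    omega
  rw [h2]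
  exact sumpow hy0 hy1 _

end Analytic

section Euler

open Finset Filter

lemma shift_sum_eq (h : ℕ → ℝ) (c M : ℕ) :
    ∑ n ∈ Finset.range M, (if c ≤ n then h (n - c) else 0) = ∑ k ∈ Finset.range (M - c), h k := by
  induction M with
  | zero => simp
  | succ M ih =>
    rw [Finset.sum_range_succ, ih]
    rcases le_or_gt c M with h1 | h1
    · rw [if_pos h1, show M + 1 - c = (M - c) + 1 by omega, Finset.sum_range_succ]
    · rw [if_neg (by omega), show M + 1 - c = 0 by omega, show M - c = 0 by omega, add_zero]

lemma pb_expand (N : ℕ) (x : ℝ) (n : ℕ) :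
    (pb (N + 1) n : ℝ) * x ^ n = (pb N n : ℝ) * x ^ n
      + (if N + 1 ≤ n then (pb (N + 1) (n - (N + 1)) : ℝ) * x ^ n else 0) := by
  rw [pb_succ]
  rcases le_or_gt (N + 1) n with h | h
  · rw [if_pos h, if_pos h]
    push_cast
    ring
  · rw [if_neg (by omega), if_neg (by omega)]
    push_cast
    ring

lemma euler_finite : ∀ N : ℕ, ∀ q : ℝ, |q| < 1 →
    Summable (fun n => (pb N n : ℝ) * q ^ n) ∧
    (∏ k ∈ Finset.range N, (1 - q ^ (k + 1))) * ∑' n, (pb N n : ℝ) * q ^ n = 1 := by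
  intro N
  induction N with
  | zero =>
    intro q _
    have hfun : (fun n => (pb 0 n : ℝ) * q ^ n) = fun n : ℕ => if n = 0 then 1 else 0 := by
      funext n
      rw [pb_zero]
      rcases eq_or_ne n 0 with rfl | hn
      · simp
      · simp [hn]
    constructor
    · rw [hfun]
      apply summable_of_ne_finset_zero (s := {0})
      intro n hn
      simp only [Finset.mem_singleton] at hn
      rw [if_neg hn]
    · rw [hfun]
      simp only [Finset.range_zero, Finset.prod_empty, one_mul]
      exact tsum_ite_eq 0 1
  | succ N IH =>
    intro q hq
    have hy0 : (0:ℝ) ≤ |q| := abs_nonneg q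
    have hy1 : |q| < 1 := hq
    obtain ⟨IHs, IHe⟩ := IH q hq
    obtain ⟨IHsy, IHey⟩ := IH |q| (by rwa [abs_abs])
    have hd : 0 < 1 - |q| ^ (N + 1) := by
      have : |q| ^ (N + 1) < 1 := pow_lt_one₀ hy0 hy1 (by omega)
      linarith
    have hTnn : 0 ≤ ∑' n, (pb N n : ℝ) * |q| ^ n :=
      tsum_nonneg fun n => mul_nonneg (Nat.cast_nonneg _) (pow_nonneg hy0 _)
    set c := (∑' n, (pb N n : ℝ) * |q| ^ n) / (1 - |q| ^ (N + 1)) with hc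
    have hc0 : 0 ≤ c := div_nonneg hTnn (le_of_lt hd)
    have hbound : ∀ M, ∑ n ∈ Finset.range M, (pb (N + 1) n : ℝ) * |q| ^ n ≤ c := by
      intro M
      induction M using Nat.strong_induction_on with
      | _ M ihM =>
        rcases Nat.eq_zero_or_pos M with rfl | hM
        · simpa using hc0
        have hS : ∑ n ∈ Finset.range M, (pb (N + 1) n : ℝ) * |q| ^ n
            = ∑ n ∈ Finset.range M, (pb N n : ℝ) * |q| ^ n
              + |q| ^ (N + 1) * ∑ k ∈ Finset.range (M - (N + 1)), (pb (N + 1) k : ℝ) * |q| ^ k := by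
          rw [← shift_sum_eq (fun k => (pb (N + 1) k : ℝ) * |q| ^ k) (N + 1) M]
          rw [Finset.mul_sum, ← Finset.sum_add_distrib]
          refine Finset.sum_congr rfl fun n _ => ?_
          rw [pb_expand]
          congr 1
          rcases le_or_gt (N + 1) n with h | h
          · rw [if_pos h, if_pos h]
            rw [show n = (N + 1) + (n - (N + 1)) by omega, pow_add]
            rw [show (N + 1) + (n - (N + 1)) - (N + 1) = n - (N + 1) by omega]
            ring
          · rw [if_neg (by omega), if_neg (by omega), mul_zero]
        rw [hS]
        have h1 : ∑ n ∈ Finset.range M, (pb N n : ℝ) * |q| ^ n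
            ≤ ∑' n, (pb N n : ℝ) * |q| ^ n :=
          Summable.sum_le_tsum _ (fun n _ => mul_nonneg (Nat.cast_nonneg _) (pow_nonneg hy0 _)) IHsy
        have h2 : ∑ k ∈ Finset.range (M - (N + 1)), (pb (N + 1) k : ℝ) * |q| ^ k ≤ c :=
          ihM _ (by omega)
        have h3 : |q| ^ (N + 1) * ∑ k ∈ Finset.range (M - (N + 1)), (pb (N + 1) k : ℝ) * |q| ^ k
            ≤ |q| ^ (N + 1) * c := mul_le_mul_of_nonneg_left h2 (pow_nonneg hy0 _)
        have h4 : (∑' n, (pb N n : ℝ) * |q| ^ n) + |q| ^ (N + 1) * c = c := by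
          rw [hc]
          field_simp
          ring
        linarith
    have hsumy : Summable (fun n => (pb (N + 1) n : ℝ) * |q| ^ n) :=
      summable_of_sum_range_le (fun n => mul_nonneg (Nat.cast_nonneg _) (pow_nonneg hy0 _)) hbound
    have hsumq : Summable (fun n => (pb (N + 1) n : ℝ) * q ^ n) := by
      apply Summable.of_norm_bounded hsumy
      intro n
      rw [norm_mul, norm_pow]
      simp [abs_of_nonneg]
    set E : ℕ → ℝ := fun n => if N + 1 ≤ n then (pb (N + 1) (n - (N + 1)) : ℝ) * q ^ n else 0
      with hE
    have hEsum : Summable E := by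
      have : E = fun n => (pb (N + 1) n : ℝ) * q ^ n - (pb N n : ℝ) * q ^ n := by
        funext n
        rw [hE]
        have := pb_expand N q n
        simp only []
        linarith [pb_expand N q n]
      rw [this]
      exact hsumq.sub IHs
    have htsum : ∑' n, (pb (N + 1) n : ℝ) * q ^ n
        = ∑' n, (pb N n : ℝ) * q ^ n + ∑' n, E n := by
      rw [← Summable.tsum_add IHs hEsum]
      exact tsum_congr fun n => pb_expand N q n
    have hEval : ∑' n, E n = q ^ (N + 1) * ∑' n, (pb (N + 1) n : ℝ) * q ^ n := by
      have hinj : Function.Injective (fun n : ℕ => n + (N + 1)) := fun a b hab => by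
        simpa using hab
      have hsupp : Function.support E ⊆ Set.range (fun n : ℕ => n + (N + 1)) := by
        intro n hn
        rcases le_or_gt (N + 1) n with h | h
        · refine ⟨n - (N + 1), ?_⟩
          show n - (N + 1) + (N + 1) = n
          omega
        · exfalso
          apply hn
          rw [hE]
          simp only []
          rw [if_neg (by omega)]
      have hkey := hinj.tsum_eq hsupp
      rw [← hkey]
      have hcong : ∀ n : ℕ, E (n + (N + 1)) = q ^ (N + 1) * ((pb (N + 1) n : ℝ) * q ^ n) := by
        intro n
        rw [hE]
        simp only []
        rw [if_pos (by omega), Nat.add_sub_cancel, pow_add]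
        ring
      rw [tsum_congr hcong, tsum_mul_left]
    refine ⟨hsumq, ?_⟩
    rw [Finset.prod_range_succ, mul_assoc]
    have key : (1 - q ^ (N + 1)) * ∑' n, (pb (N + 1) n : ℝ) * q ^ n
        = ∑' n, (pb N n : ℝ) * q ^ n := by
      rw [hEval] at htsum
      linear_combination htsum
    rw [key, IHe]

end Euler

section Limit

open Finset Filter

lemma inv_one_sub_le {y t : ℝ} (hy1 : y < 1) (ht0 : 0 ≤ t) (hty : t ≤ y) :
    (1 - t)⁻¹ ≤ Real.exp (t * (1 - y)⁻¹) := by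
  have h1t : 0 < 1 - t := by linarith
  have h1y : 0 < 1 - y := by linarith
  have hiy : 0 ≤ (1 - y)⁻¹ := inv_nonneg.mpr (le_of_lt h1y)
  have he : 1 + t * (1 - y)⁻¹ ≤ Real.exp (t * (1 - y)⁻¹) := by
    have := Real.add_one_le_exp (t * (1 - y)⁻¹)
    linarith
  have hmul : t * ((1 - y) * (1 - y)⁻¹) ≤ t * ((1 - t) * (1 - y)⁻¹) := by
    apply mul_le_mul_of_nonneg_left _ ht0
    exact mul_le_mul_of_nonneg_right (by linarith) hiy
  rw [mul_inv_cancel₀ (ne_of_gt h1y), mul_one] at hmul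
  have hkey : 1 ≤ (1 - t) * Real.exp (t * (1 - y)⁻¹) := by
    have h5 : (1 - t) * (1 + t * (1 - y)⁻¹) ≤ (1 - t) * Real.exp (t * (1 - y)⁻¹) :=
      mul_le_mul_of_nonneg_left he (le_of_lt h1t)
    nlinarith
  rw [inv_eq_one_div, div_le_iff₀ h1t]
  linarith [hkey, mul_comm (1 - t) (Real.exp (t * (1 - y)⁻¹))]

lemma prod_inv_bound {y : ℝ} (hy0 : 0 ≤ y) (hy1 : y < 1) (M : ℕ) :
    (∏ k ∈ Finset.range M, (1 - y ^ (k + 1)))⁻¹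
      ≤ Real.exp ((1 - y)⁻¹ * (1 - y)⁻¹) := by
  have hfac : ∀ k : ℕ, 0 < 1 - y ^ (k + 1) := by
    intro k
    have : y ^ (k + 1) < 1 := by
      rcases eq_or_lt_of_le hy0 with h | h
      · rw [← h]; simp
      · exact pow_lt_one₀ hy0 hy1 (by omega)
    linarith
  rw [← Finset.prod_inv_distrib]
  calc ∏ k ∈ Finset.range M, (1 - y ^ (k + 1))⁻¹
      ≤ ∏ k ∈ Finset.range M, Real.exp (y ^ (k + 1) * (1 - y)⁻¹) := by
        apply Finset.prod_le_prod
        · intro k _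
          exact inv_nonneg.mpr (le_of_lt (hfac k))
        · intro k _
          apply inv_one_sub_le hy1 (pow_nonneg hy0 _)
          calc y ^ (k + 1) ≤ y ^ 1 := pow_le_pow_of_le_one hy0 (le_of_lt hy1) (by omega)
          _ = y := pow_one y
    _ = Real.exp (∑ k ∈ Finset.range M, y ^ (k + 1) * (1 - y)⁻¹) := (Real.exp_sum _ _).symm
    _ ≤ Real.exp ((1 - y)⁻¹ * (1 - y)⁻¹) := by
        apply Real.exp_le_exp.mpr
        rw [← Finset.sum_mul]
        apply mul_le_mul_of_nonneg_right (sumpow hy0 hy1 _)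
        exact inv_nonneg.mpr (by linarith)

lemma pfn_summable_abs {y : ℝ} (hy0 : 0 ≤ y) (hy1 : y < 1) :
    Summable (fun n => (pfn n : ℝ) * y ^ n) := by
  apply summable_of_sum_range_le
    (c := Real.exp ((1 - y)⁻¹ * (1 - y)⁻¹))
    (fun n => mul_nonneg (Nat.cast_nonneg _) (pow_nonneg hy0 _))
  intro M
  have habs : |y| < 1 := by rwa [abs_of_nonneg hy0]
  have h1 : ∑ n ∈ Finset.range M, (pfn n : ℝ) * y ^ n
      = ∑ n ∈ Finset.range M, (pb M n : ℝ) * y ^ n := by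
    refine Finset.sum_congr rfl fun n hn => ?_
    rw [pb_eq_pfn (le_of_lt (Finset.mem_range.mp hn))]
  obtain ⟨hs, hid⟩ := euler_finite M y habs
  have h2 : ∑ n ∈ Finset.range M, (pb M n : ℝ) * y ^ n ≤ ∑' n, (pb M n : ℝ) * y ^ n :=
    Summable.sum_le_tsum _ (fun n _ => mul_nonneg (Nat.cast_nonneg _) (pow_nonneg hy0 _)) hs
  have hfac : ∀ k : ℕ, 0 < 1 - y ^ (k + 1) := by
    intro k
    have : y ^ (k + 1) < 1 := by
      rcases eq_or_lt_of_le hy0 with h | h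
      · rw [← h]; simp
      · exact pow_lt_one₀ hy0 hy1 (by omega)
    linarith
  have hprodpos : 0 < ∏ k ∈ Finset.range M, (1 - y ^ (k + 1)) :=
    Finset.prod_pos fun k _ => hfac k
  have h3 : ∑' n, (pb M n : ℝ) * y ^ n = (∏ k ∈ Finset.range M, (1 - y ^ (k + 1)))⁻¹ :=
    eq_inv_of_mul_eq_one_right hid
  rw [h1]
  refine le_trans h2 ?_
  rw [h3]
  exact prod_inv_bound hy0 hy1 M

lemma pfn_summable {q : ℝ} (hq : |q| < 1) : Summable (fun n => (pfn n : ℝ) * q ^ n) := by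
  apply Summable.of_norm_bounded (pfn_summable_abs (abs_nonneg q) hq)
  intro n
  rw [norm_mul, norm_pow]
  simp [abs_of_nonneg]

end Limit

section Limit2

open Finset Filter Topology

variable {q : ℝ}

lemma summable_pb_q (N : ℕ) (hq : |q| < 1) : Summable (fun n => (pb N n : ℝ) * q ^ n) :=
  (euler_finite N q hq).1

lemma pb_prod_tsum (N : ℕ) (hq : |q| < 1) :
    (∏ k ∈ Finset.range N, (1 - q ^ (k + 1))) * ∑' n, (pb N n : ℝ) * q ^ n = 1 :=
  (euler_finite N q hq).2

lemma tsum_pb_tendsto (hq : |q| < 1) :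
    Tendsto (fun N => ∑' n, (pb N n : ℝ) * q ^ n) atTop
      (𝓝 (∑' n, (pfn n : ℝ) * q ^ n)) := by
  set u : ℕ → ℝ := fun n => (pfn n : ℝ) * |q| ^ n with hu
  have hus : Summable u := pfn_summable_abs (abs_nonneg q) hq
  have hun : ∀ n, 0 ≤ u n := fun n => mul_nonneg (Nat.cast_nonneg _) (pow_nonneg (abs_nonneg q) _)
  have hdiff : ∀ N, ‖(∑' n, (pb N n : ℝ) * q ^ n) - ∑' n, (pfn n : ℝ) * q ^ n‖
      ≤ ∑' k, u (k + (N + 1)) := by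
    intro N
    have h1 : (∑' n, (pb N n : ℝ) * q ^ n) - ∑' n, (pfn n : ℝ) * q ^ n
        = ∑' n, ((pb N n : ℝ) * q ^ n - (pfn n : ℝ) * q ^ n) :=
      (Summable.tsum_sub (summable_pb_q N hq) (pfn_summable hq)).symm
    have hnorm : ∀ n, ‖(pb N n : ℝ) * q ^ n - (pfn n : ℝ) * q ^ n‖
        ≤ (if N + 1 ≤ n then u n else 0) := by
      intro n
      rcases le_or_gt (N + 1) n with h | h
      · rw [if_pos h]
        have hle : (pb N n : ℝ) ≤ (pfn n : ℝ) := by exact_mod_cast pb_le_pfn N n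
        have : ‖(pb N n : ℝ) * q ^ n - (pfn n : ℝ) * q ^ n‖
            = ((pfn n : ℝ) - pb N n) * |q| ^ n := by
          rw [show (pb N n : ℝ) * q ^ n - (pfn n : ℝ) * q ^ n
            = -(((pfn n : ℝ) - pb N n) * q ^ n) by ring]
          rw [norm_neg, norm_mul, norm_pow]
          simp only [Real.norm_eq_abs]
          rw [abs_of_nonneg (by linarith)]
        rw [this, hu]
        have : ((pfn n : ℝ) - pb N n) ≤ (pfn n : ℝ) := by
          have : (0:ℝ) ≤ (pb N n : ℝ) := Nat.cast_nonneg _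
          linarith
        exact mul_le_mul_of_nonneg_right this (pow_nonneg (abs_nonneg q) _)
      · rw [if_neg (by omega), pb_eq_pfn (by omega : n ≤ N)]
        simp
    have hsummv : Summable (fun n => if N + 1 ≤ n then u n else 0) := by
      apply Summable.of_nonneg_of_le (fun n => by positivity) _ hus
      intro n
      rcases le_or_gt (N + 1) n with h | h
      · rw [if_pos h]
      · rw [if_neg (by omega)]
        exact hun n
    have hsumnorm : Summable (fun n => ‖(pb N n : ℝ) * q ^ n - (pfn n : ℝ) * q ^ n‖) := by
      apply Summable.of_nonneg_of_le (fun n => norm_nonneg _) hnorm hsummv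
    have h2 : ‖∑' n, ((pb N n : ℝ) * q ^ n - (pfn n : ℝ) * q ^ n)‖
        ≤ ∑' n, ‖(pb N n : ℝ) * q ^ n - (pfn n : ℝ) * q ^ n‖ :=
      norm_tsum_le_tsum_norm hsumnorm
    have h3 : ∑' n, ‖(pb N n : ℝ) * q ^ n - (pfn n : ℝ) * q ^ n‖
        ≤ ∑' n, (if N + 1 ≤ n then u n else 0) :=
      Summable.tsum_le_tsum hnorm hsumnorm hsummv
    have h4 : ∑' n, (if N + 1 ≤ n then u n else 0) = ∑' k, u (k + (N + 1)) := by
      have hinj : Function.Injective (fun k : ℕ => k + (N + 1)) := fun a b hab => by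
        simpa using hab
      have hsupp : Function.support (fun n => if N + 1 ≤ n then u n else 0)
          ⊆ Set.range (fun k : ℕ => k + (N + 1)) := by
        intro n hn
        rcases le_or_gt (N + 1) n with h | h
        · refine ⟨n - (N + 1), ?_⟩
          show n - (N + 1) + (N + 1) = n
          omega
        · exact absurd (if_neg (by omega)) hn
      have := hinj.tsum_eq hsupp
      rw [← this]
      refine tsum_congr fun k => ?_
      rw [if_pos (by omega)]
    rw [h1]
    calc ‖∑' n, ((pb N n : ℝ) * q ^ n - (pfn n : ℝ) * q ^ n)‖
        ≤ ∑' n, ‖(pb N n : ℝ) * q ^ n - (pfn n : ℝ) * q ^ n‖ := h2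
      _ ≤ ∑' n, (if N + 1 ≤ n then u n else 0) := h3
      _ = ∑' k, u (k + (N + 1)) := h4
  have htail : Tendsto (fun N : ℕ => ∑' k, u (k + (N + 1))) atTop (𝓝 0) := by
    have h := tendsto_sum_nat_add u
    exact h.comp (tendsto_add_atTop_nat 1)
  have hzero : Tendsto (fun N => (∑' n, (pb N n : ℝ) * q ^ n) - ∑' n, (pfn n : ℝ) * q ^ n)
      atTop (𝓝 0) := squeeze_zero_norm hdiff htail
  have := hzero.add_const (∑' n, (pfn n : ℝ) * q ^ n)
  simpa using this

lemma abs_prod_le_B (hq : |q| < 1) (N : ℕ) :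
    |∏ k ∈ Finset.range N, (1 - q ^ (k + 1))| ≤ Real.exp ((1 - |q|)⁻¹) := by
  rw [Finset.abs_prod]
  calc ∏ k ∈ Finset.range N, |1 - q ^ (k + 1)|
      ≤ ∏ k ∈ Finset.range N, (1 + |q| ^ (k + 1)) := by
        apply Finset.prod_le_prod (fun k _ => abs_nonneg _)
        intro k _
        calc |1 - q ^ (k + 1)| = |1 + (- q ^ (k + 1))| := by ring_nf
          _ ≤ |1| + |(- q ^ (k + 1))| := abs_add_le _ _
          _ = 1 + |q| ^ (k + 1) := by rw [abs_one, abs_neg, abs_pow]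
    _ ≤ Real.exp (∑ k ∈ Finset.range N, |q| ^ (k + 1)) :=
        prod_one_add_le_exp _ _ (fun k => pow_nonneg (abs_nonneg q) _)
    _ ≤ Real.exp ((1 - |q|)⁻¹) :=
        Real.exp_le_exp.mpr (sumpow (abs_nonneg q) hq _)

lemma abs_tsum_pfn_pos (hq : |q| < 1) :
    (Real.exp ((1 - |q|)⁻¹))⁻¹ ≤ |∑' n, (pfn n : ℝ) * q ^ n| := by
  have hB : 0 < Real.exp ((1 - |q|)⁻¹) := Real.exp_pos _
  have hlow : ∀ N, (Real.exp ((1 - |q|)⁻¹))⁻¹ ≤ |∑' n, (pb N n : ℝ) * q ^ n| := by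
    intro N
    have h1 := pb_prod_tsum N hq
    have h2 : |∏ k ∈ Finset.range N, (1 - q ^ (k + 1))| * |∑' n, (pb N n : ℝ) * q ^ n| = 1 := by
      rw [← abs_mul, h1, abs_one]
    have h3 := abs_prod_le_B hq N
    have habs : 0 ≤ |∑' n, (pb N n : ℝ) * q ^ n| := abs_nonneg _
    rw [inv_le_iff_one_le_mul₀ hB]
    nlinarith [mul_le_mul_of_nonneg_right h3 habs]
  exact ge_of_tendsto' ((tsum_pb_tendsto hq).abs) hlow

lemma tsum_pfn_ne_zero (hq : |q| < 1) : (∑' n, (pfn n : ℝ) * q ^ n) ≠ 0 := by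
  intro h0
  have := abs_tsum_pfn_pos hq
  rw [h0, abs_zero] at this
  have hB : 0 < (Real.exp ((1 - |q|)⁻¹))⁻¹ := inv_pos.mpr (Real.exp_pos _)
  linarith

lemma prod_range_tendsto (hq : |q| < 1) :
    Tendsto (fun N => ∏ k ∈ Finset.range N, (1 - q ^ (k + 1))) atTop
      (𝓝 (∑' n, (pfn n : ℝ) * q ^ n)⁻¹) := by
  have heq : ∀ N, ∏ k ∈ Finset.range N, (1 - q ^ (k + 1))
      = (∑' n, (pb N n : ℝ) * q ^ n)⁻¹ :=
    fun N => eq_inv_of_mul_eq_one_left (pb_prod_tsum N hq)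
  have h := (tsum_pb_tendsto hq).inv₀ (tsum_pfn_ne_zero hq)
  refine h.congr fun N => (heq N).symm

lemma hasProd_euler (hq : |q| < 1) :
    HasProd (fun j : ℕ => 1 - q ^ (j + 1)) (∑' n, (pfn n : ℝ) * q ^ n)⁻¹ := by
  rw [HasProd]
  rw [SummationFilter.unconditional_filter, Metric.tendsto_atTop]
  intro ε hε
  set B := Real.exp ((1 - |q|)⁻¹) with hB
  have hB0 : 0 < B := Real.exp_pos _
  set L := (∑' n, (pfn n : ℝ) * q ^ n)⁻¹ with hL
  -- choose N₀ for the sequence limit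
  obtain ⟨N₀, hN₀⟩ := (Metric.tendsto_atTop.mp (prod_range_tendsto hq)) (ε / 2) (by linarith)
  -- choose N₁ for the tail bound
  have htb : Tendsto (fun N : ℕ => B * (Real.exp (|q| ^ N * (1 - |q|)⁻¹) - 1)) atTop (𝓝 0) := by
    have h1 : Tendsto (fun N : ℕ => |q| ^ N) atTop (𝓝 0) :=
      tendsto_pow_atTop_nhds_zero_of_lt_one (abs_nonneg q) hq
    have h2 : Continuous (fun x : ℝ => B * (Real.exp (x * (1 - |q|)⁻¹) - 1)) := by
      continuity
    have h3 := (h2.tendsto 0).comp h1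
    simpa [Function.comp_def] using h3
  obtain ⟨N₁, hN₁⟩ := (Metric.tendsto_atTop.mp htb) (ε / 2) (by linarith)
  refine ⟨Finset.range (max N₀ N₁), fun s hs => ?_⟩
  set N := max N₀ N₁ with hN
  have hsub : Finset.range N ⊆ s := hs
  have hsplit : (∏ j ∈ s \ Finset.range N, (1 - q ^ (j + 1)))
      * ∏ j ∈ Finset.range N, (1 - q ^ (j + 1)) = ∏ j ∈ s, (1 - q ^ (j + 1)) :=
    Finset.prod_sdiff hsub
  have htail1 : |∏ j ∈ s \ Finset.range N, (1 - q ^ (j + 1)) - 1|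
      ≤ Real.exp (∑ j ∈ s \ Finset.range N, |q| ^ (j + 1)) - 1 := by
    have h := abs_prod_one_add_sub_one (s \ Finset.range N) (fun j => - q ^ (j + 1))
    simp only [← sub_eq_add_neg] at h
    have he : ∑ j ∈ s \ Finset.range N, |(- q ^ (j + 1))| = ∑ j ∈ s \ Finset.range N, |q| ^ (j + 1) :=
      Finset.sum_congr rfl fun j _ => by rw [abs_neg, abs_pow]
    rw [he] at h
    exact h
  have htail2 : ∑ j ∈ s \ Finset.range N, |q| ^ (j + 1) ≤ |q| ^ N * (1 - |q|)⁻¹ := by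
    apply tail_sum (abs_nonneg q) hq
    intro j hj
    have := Finset.mem_sdiff.mp hj
    simpa using this.2
  have hdist1 : |∏ j ∈ s, (1 - q ^ (j + 1)) - ∏ j ∈ Finset.range N, (1 - q ^ (j + 1))|
      ≤ B * (Real.exp (|q| ^ N * (1 - |q|)⁻¹) - 1) := by
    rw [← hsplit]
    have heq : (∏ j ∈ s \ Finset.range N, (1 - q ^ (j + 1)))
        * ∏ j ∈ Finset.range N, (1 - q ^ (j + 1))
        - ∏ j ∈ Finset.range N, (1 - q ^ (j + 1))
        = (∏ j ∈ Finset.range N, (1 - q ^ (j + 1)))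
          * (∏ j ∈ s \ Finset.range N, (1 - q ^ (j + 1)) - 1) := by ring
    rw [heq, abs_mul]
    have h5 : Real.exp (∑ j ∈ s \ Finset.range N, |q| ^ (j + 1)) - 1
        ≤ Real.exp (|q| ^ N * (1 - |q|)⁻¹) - 1 := by
      have := Real.exp_le_exp.mpr htail2
      linarith
    exact mul_le_mul (abs_prod_le_B hq N) (le_trans htail1 h5) (abs_nonneg _)
      (le_of_lt hB0)
  have hN0le : N₀ ≤ N := le_max_left _ _
  have hN1le : N₁ ≤ N := le_max_right _ _
  have hd0 := hN₀ N hN0le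
  have hd1 := hN₁ N hN1le
  rw [Real.dist_eq] at hd0 hd1 ⊢
  rw [← hL] at hd0
  have htbnn : 0 ≤ B * (Real.exp (|q| ^ N * (1 - |q|)⁻¹) - 1) := by
    have h1e : (1:ℝ) ≤ Real.exp (|q| ^ N * (1 - |q|)⁻¹) := by
      apply Real.one_le_exp
      have h1y : (0:ℝ) < 1 - |q| := by linarith
      positivity
    nlinarith
  have hd1' : B * (Real.exp (|q| ^ N * (1 - |q|)⁻¹) - 1) < ε / 2 := by
    rw [sub_zero, abs_of_nonneg htbnn] at hd1
    exact hd1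
  calc |∏ j ∈ s, (1 - q ^ (j + 1)) - L|
      ≤ |∏ j ∈ s, (1 - q ^ (j + 1)) - ∏ j ∈ Finset.range N, (1 - q ^ (j + 1))|
        + |∏ j ∈ Finset.range N, (1 - q ^ (j + 1)) - L| := abs_sub_le _ _ _
    _ < ε / 2 + ε / 2 := add_lt_add_of_le_of_lt (le_trans hdist1 (le_of_lt hd1')) hd0
    _ = ε := by ring

lemma euler_eq_inv (hq : |q| < 1) :
    euler q = (∑' n, (pfn n : ℝ) * q ^ n)⁻¹ :=
  (hasProd_euler hq).tprod_eq

lemma euler_inv (hq : |q| < 1) :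
    (euler q)⁻¹ = ∑' n, (pfn n : ℝ) * q ^ n := by
  rw [euler_eq_inv hq, inv_inv]

end Limit2

section Assembly

open Finset Filter

lemma g_lt (m j : ℕ) : g m j < g m (j + 1) := by
  have h1 := two_mul_g m j
  have h2 := two_mul_g m (j + 1)
  have key : (j + 2) * (3 * (j + 2) - 1) = (j + 1) * (3 * (j + 1) - 1) + (6 * j + 8) := by
    have e1 : 3 * (j + 2) - 1 = 3 * j + 5 := by omega
    have e2 : 3 * (j + 1) - 1 = 3 * j + 2 := by omega
    rw [e1, e2]; ring
  have key2 : m * (j + 2) = m * (j + 1) + m := by ring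
  have e3 : j + 1 + 1 = j + 2 := by omega
  rw [e3] at h2
  omega

lemma g_strictMono (m : ℕ) : StrictMono (g m) := strictMono_nat_of_lt_succ (g_lt m)

/-- coefficients of the theta-type series -/
noncomputable def ccoef (m i : ℕ) : ℝ :=
  ∑ j ∈ (Finset.range (i + 1)).filter (fun j => g m j = i), (-1 : ℝ) ^ j

lemma ccoef_filter_eq (m j : ℕ) :
    (Finset.range (g m j + 1)).filter (fun j' => g m j' = g m j) = {j} := by
  ext j'
  simp only [Finset.mem_filter, Finset.mem_range, Finset.mem_singleton]
  constructor
  · rintro ⟨_, h2⟩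
    exact (g_strictMono m).injective h2
  · rintro rfl
    first
    | exact ⟨by have := g_ge m j; omega, rfl⟩
    | exact ⟨by have := g_ge m j'; omega, rfl⟩

lemma ccoef_g (m j : ℕ) : ccoef m (g m j) = (-1 : ℝ) ^ j := by
  rw [ccoef, ccoef_filter_eq, Finset.sum_singleton]

lemma ccoef_eq_zero {m i : ℕ} (h : ∀ j, g m j ≠ i) : ccoef m i = 0 := by
  rw [ccoef]
  apply Finset.sum_eq_zero
  intro j hj
  exact absurd (Finset.mem_filter.mp hj).2 (h j)

lemma abs_ccoef_le_one (m i : ℕ) : |ccoef m i| ≤ 1 := by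
  by_cases h : ∃ j, g m j = i
  · obtain ⟨j, rfl⟩ := h
    rw [ccoef_g]
    rw [abs_pow, abs_neg, abs_one, one_pow]
  · push_neg at h
    rw [ccoef_eq_zero h, abs_zero]
    norm_num

end Assembly

section Final

open Finset Filter

variable {q : ℝ}

lemma coeff_identity (m N : ℕ) :
    ∑ kl ∈ Finset.HasAntidiagonal.antidiagonal N, (pfn kl.1 : ℝ) * ccoef m kl.2 = ((Az m N : ℤ) : ℝ) := by
  have hR : ((Az m N : ℤ) : ℝ)
      = ∑ j ∈ (Finset.range N).filter (fun j => g m j ≤ N),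
          (-1 : ℝ) ^ j * (pfn (N - g m j) : ℝ) := by
    rw [Az_eq_sum N m]
    push_cast
    rw [← Finset.sum_subset (Finset.filter_subset (fun j => g m j ≤ N) (Finset.range N)) ?_]
    · refine Finset.sum_congr rfl fun j hj => ?_
      have hg : g m j ≤ N := (Finset.mem_filter.mp hj).2
      congr 1
      rw [Pz, if_pos (by push_cast; omega)]
      have : ((N : ℤ) - (g m j : ℤ)).toNat = N - g m j := by omega
      rw [this]
      norm_cast
    · intro j hjr hjf
      have hg : ¬ g m j ≤ N := by
        simp only [Finset.mem_filter, Finset.mem_range] at hjr hjf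
        tauto
      rw [Pz, if_neg (by push_cast; omega)]
      push_cast
      ring
  rw [hR, Finset.Nat.sum_antidiagonal_eq_sum_range_succ_mk]
  have hexp : ∀ k ∈ Finset.range (N + 1),
      (pfn k : ℝ) * ccoef m (N - k)
        = ∑ j ∈ (Finset.range (N - k + 1)).filter (fun j => g m j = N - k),
            (pfn k : ℝ) * (-1 : ℝ) ^ j := by
    intro k _
    rw [ccoef, Finset.mul_sum]
  rw [Finset.sum_congr rfl hexp, Finset.sum_sigma']
  refine Finset.sum_nbij' (fun p => p.2) (fun j => ⟨N - g m j, j⟩) ?_ ?_ ?_ ?_ ?_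
  · rintro ⟨k, j⟩ hp
    simp only [Finset.mem_sigma, Finset.mem_range, Finset.mem_filter] at hp
    obtain ⟨hk, hj, hgj⟩ := hp
    simp only [Finset.mem_filter, Finset.mem_range]
    have := g_ge m j
    omega
  · intro j hj
    simp only [Finset.mem_filter, Finset.mem_range] at hj
    simp only [Finset.mem_sigma, Finset.mem_range, Finset.mem_filter]
    have := g_ge m j
    omega
  · rintro ⟨k, j⟩ hp
    simp only [Finset.mem_sigma, Finset.mem_range, Finset.mem_filter] at hp
    obtain ⟨hk, hj, hgj⟩ := hp
    have : N - g m j = k := by omega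
    simp [this]
  · intro j _
    rfl
  · rintro ⟨k, j⟩ hp
    simp only [Finset.mem_sigma, Finset.mem_range, Finset.mem_filter] at hp
    obtain ⟨hk, hj, hgj⟩ := hp
    have : N - g m j = k := by omega
    rw [this]
    ring

lemma summable_pfn_norm (hq : |q| < 1) : Summable (fun n => ‖(pfn n : ℝ) * q ^ n‖) := by
  refine (pfn_summable_abs (abs_nonneg q) hq).congr fun n => ?_
  rw [norm_mul, norm_pow, Real.norm_eq_abs, Real.norm_eq_abs]
  rw [Nat.abs_cast]

lemma summable_ccoef_norm (m : ℕ) (hq : |q| < 1) :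
    Summable (fun i => ‖ccoef m i * q ^ i‖) := by
  apply Summable.of_nonneg_of_le (fun i => norm_nonneg _) _
    (summable_geometric_of_lt_one (abs_nonneg q) hq)
  intro i
  rw [norm_mul, norm_pow, Real.norm_eq_abs, Real.norm_eq_abs]
  calc |ccoef m i| * |q| ^ i ≤ 1 * |q| ^ i :=
        mul_le_mul_of_nonneg_right (abs_ccoef_le_one m i) (pow_nonneg (abs_nonneg q) i)
    _ = |q| ^ i := one_mul _

lemma tsum_ccoef_eq (m : ℕ) :
    ∑' i, ccoef m i * q ^ i = ∑' j, (-1 : ℝ) ^ j * q ^ (g m j) := by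
  have hsupp : Function.support (fun i => ccoef m i * q ^ i) ⊆ Set.range (g m) := by
    intro i hi
    by_contra hr
    apply hi
    have : ∀ j, g m j ≠ i := by
      intro j hj
      exact hr ⟨j, hj⟩
    show ccoef m i * q ^ i = 0
    rw [ccoef_eq_zero this, zero_mul]
  have h := ((g_strictMono m).injective).tsum_eq (f := fun i => ccoef m i * q ^ i) hsupp
  rw [← h]
  refine tsum_congr fun j => ?_
  show ccoef m (g m j) * q ^ g m j = (-1 : ℝ) ^ j * q ^ g m j
  rw [ccoef_g]

lemma summable_Az (m : ℕ) (hq : |q| < 1) :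
    Summable (fun N : ℕ => ((Az m N : ℤ) : ℝ) * q ^ N) := by
  apply Summable.of_norm_bounded (pfn_summable_abs (abs_nonneg q) hq)
  intro N
  rw [norm_mul, norm_pow, Real.norm_eq_abs, Real.norm_eq_abs]
  apply mul_le_mul_of_nonneg_right _ (pow_nonneg (abs_nonneg q) N)
  rcases Nat.eq_zero_or_pos N with rfl | hN
  · rw [Az, if_neg (by norm_num)]
    simp
  · rw [Az, if_pos (by exact_mod_cast hN)]
    rw [Int.toNat_natCast]
    rw [show ((aR m N : ℤ) : ℝ) = ((aR m N : ℕ) : ℝ) by push_cast; ring]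
    rw [Nat.abs_cast]
    exact_mod_cast aR_le_pfn m N

theorem Q_formula (hq : |q| < 1) (m : ℕ) :
    Q q m = (euler q)⁻¹ * ∑' j, (-1 : ℝ) ^ j * q ^ (g m j) := by
  have hQ : Q q m = ∑' n : ℕ, (aR m (n + 1) : ℝ) * q ^ (n + 1) := rfl
  have hsAz := summable_Az m hq
  have hsucc : ∀ n : ℕ, ((Az m ((n + 1 : ℕ) : ℤ) : ℤ) : ℝ) * q ^ (n + 1)
      = (aR m (n + 1) : ℝ) * q ^ (n + 1) := by
    intro n
    rw [Az, if_pos (by exact_mod_cast Nat.succ_pos n)]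
    rw [Int.toNat_natCast]
    push_cast
    ring
  have step1 : Q q m = ∑' N : ℕ, ((Az m N : ℤ) : ℝ) * q ^ N := by
    rw [hQ, Summable.tsum_eq_zero_add hsAz]
    have hz : Az m ((0 : ℕ) : ℤ) = 0 := by
      rw [Az, if_neg (by norm_num)]
    rw [hz]
    simp only [Int.cast_zero, zero_mul, zero_add]
    exact (tsum_congr hsucc).symm
  have step2 : ∑' N : ℕ, ((Az m N : ℤ) : ℝ) * q ^ N
      = (∑' n, (pfn n : ℝ) * q ^ n) * ∑' i, ccoef m i * q ^ i := by
    rw [tsum_mul_tsum_eq_tsum_sum_antidiagonal_of_summable_norm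
      (summable_pfn_norm hq) (summable_ccoef_norm m hq)]
    refine tsum_congr fun N => ?_
    have hterm : ∀ kl ∈ Finset.HasAntidiagonal.antidiagonal N,
        (pfn kl.1 : ℝ) * q ^ kl.1 * (ccoef m kl.2 * q ^ kl.2)
          = (pfn kl.1 : ℝ) * ccoef m kl.2 * q ^ N := by
      rintro ⟨k, l⟩ hkl
      have : k + l = N := Finset.HasAntidiagonal.mem_antidiagonal.mp hkl
      rw [← this, pow_add]
      ring
    rw [Finset.sum_congr rfl hterm, ← Finset.sum_mul, coeff_identity]
  rw [step1, step2, euler_inv hq, tsum_ccoef_eq]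

end Final

/-- for m ≥ 0,
`Q_m(q) = (1/(q;q)_∞) Σ_{j≥1} (-1)^{j-1} q^{j(3j-1)/2 + mj}`. -/
theorem stmt3 (q : ℝ) (hq : |q| < 1) (m : ℕ) :
    Q q m = (euler q)⁻¹ *
      ∑' j : ℕ, (-1 : ℝ) ^ j * q ^ ((j + 1) * (3 * (j + 1) - 1) / 2 + m * (j + 1)) := by
  have h := Q_formula hq m
  simpa only [g] using h

end Dyson
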